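/- Let I be a nontrivial interval of ℝ and f : I → ℝ a C^2 function such that D^2 f is piecewise monotone. Then there exists a closed discrete set E ⊆ I which witnesses the piecewise monotonicity of f, Df, and D^2 f simultaneously, and which has at most one point on each platform of D^2 f. -/

import Mathlib

open Set MeasureTheory

/-- `K` is closed and discrete in `I`: every point of `I` has a punctured
neighborhood missing `K`. -/
def ClosedDiscreteIn (K I : Set ℝ) : Prop :=
  K ⊆ I ∧ ∀ x ∈ I, ∃ ε > 0, ∀ y ∈ K, |y - x| < ε → y = x

/-- `f` is (non-strictly) monotone on `S`. -/
def MonoOn (f : ℝ → ℝ) (S : Set ℝ) : Prop :=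
  MonotoneOn f S ∨ AntitoneOn f S

/-- `K` witnesses the piecewise monotonicity of `f` on `I`. -/
def Witnesses (f : ℝ → ℝ) (I K : Set ℝ) : Prop :=
  ClosedDiscreteIn K I ∧
    ∀ x ∈ I \ K, MonoOn f (connectedComponentIn (I \ K) x)

/-- `f` is piecewise monotone on `I`. -/
def PiecewiseMonotoneOn (f : ℝ → ℝ) (I : Set ℝ) : Prop :=
  ∃ K, Witnesses f I K

/-- The platform of `f` containing `p`: the connected component of the fiber
of `f` (within `I`) containing `p`. -/
def Platform (f : ℝ → ℝ) (I : Set ℝ) (p : ℝ) : Set ℝ :=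
  connectedComponentIn {x ∈ I | f x = f p} p

/-- `P` is a platform of `f` on `I`. -/
def IsPlatform (f : ℝ → ℝ) (I P : Set ℝ) : Prop :=
  ∃ p ∈ I, P = Platform f I p

/-- `P` is a turning platform of `f` on `I`. -/
def IsTurningPlatform (f : ℝ → ℝ) (I P : Set ℝ) : Prop :=
  IsPlatform f I P ∧
  ∃ a b c ε, a ≤ b ∧ P = Icc a b ∧ (∀ x ∈ P, f x = c) ∧ 0 < ε ∧
    Ioo (a - ε) (b + ε) ⊆ I ∧
    ((∀ x ∈ Ioo (a - ε) (b + ε) \ P, c < f x) ∨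
     (∀ x ∈ Ioo (a - ε) (b + ε) \ P, f x < c))

/-- `x` is a turning point of `f` on `I`. -/
def IsTurningPoint (f : ℝ → ℝ) (I : Set ℝ) (x : ℝ) : Prop :=
  ∃ P, IsTurningPlatform f I P ∧ x ∈ P

namespace CW2
open scoped Classical

/-! ### Generic helper lemmas -/

/-- Shrinking a finite exceptional set to get discreteness at a point. -/
lemma shrink {E F : Set ℝ} {x ε : ℝ} (hε : 0 < ε) (hF : F.Finite)
    (h : ∀ y ∈ E, |y - x| < ε → y ∈ F) : ∃ δ > 0, ∀ y ∈ E, |y - x| < δ → y = x := by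
  classical
  have key : ∀ (G : Finset ℝ), ∃ δ > 0, ∀ y ∈ G, y ≠ x → δ ≤ |y - x| := by
    intro G
    induction G using Finset.induction_on with
    | empty => exact ⟨1, one_pos, by simp⟩
    | @insert a s _ ih =>
      obtain ⟨δ, hδ, hδ'⟩ := ih
      by_cases hax : a = x
      · refine ⟨δ, hδ, ?_⟩
        intro y hy hyx
        rcases Finset.mem_insert.1 hy with rfl | hy'
        · exact absurd hax hyx
        · exact hδ' y hy' hyx
      · refine ⟨min δ |a - x|, lt_min hδ (by simpa [abs_pos, sub_eq_zero] using hax), ?_⟩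
        intro y hy hyx
        rcases Finset.mem_insert.1 hy with rfl | hy'
        · exact min_le_right _ _
        · exact le_trans (min_le_left _ _) (hδ' y hy' hyx)
  obtain ⟨δ, hδ, hδ'⟩ := key hF.toFinset
  refine ⟨min ε δ, lt_min hε hδ, fun y hy hlt => ?_⟩
  by_contra hyx
  have hyF : y ∈ hF.toFinset := hF.mem_toFinset.2 (h y hy (lt_of_lt_of_le hlt (min_le_left _ _)))
  exact absurd (lt_of_lt_of_le hlt (min_le_right _ _)) (not_lt.2 (hδ' y hyF hyx))

/-- A closed discrete set meets a compact interval inside `I` in a finite set. -/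
lemma finite_inter_Icc {E I : Set ℝ} (hE : ClosedDiscreteIn E I) {a b : ℝ}
    (hab : Icc a b ⊆ I) : (E ∩ Icc a b).Finite := by
  classical
  choose! ε hε hε' using hE.2
  have hcomp : IsCompact (Icc a b) := isCompact_Icc
  obtain ⟨t, ht, hcover⟩ := hcomp.elim_nhds_subcover (fun x => Metric.ball x (ε x))
    (fun x hx => Metric.ball_mem_nhds x (hε x (hab hx)))
  have : E ∩ Icc a b ⊆ ↑t := by
    intro y ⟨hyE, hyI⟩
    obtain ⟨z, hz, hyz⟩ := Set.mem_iUnion₂.1 (hcover hyI)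
    have : y = z := hε' z (hab (ht z hz)) y hyE (by simpa [Real.dist_eq] using hyz)
    simpa [this] using hz
  exact Set.Finite.subset t.finite_toSet this

/-- Extending monotonicity from an open interval to the closed one by continuity. -/
lemma monotoneOn_Icc_of_Ioo {g : ℝ → ℝ} {u v : ℝ} (huv : u < v)
    (hc : ContinuousOn g (Icc u v)) (hm : MonotoneOn g (Ioo u v)) :
    MonotoneOn g (Icc u v) := by
  have hleft : ∀ w ∈ Ioo u v, g u ≤ g w := by
    intro w hw
    have hne : (nhdsWithin u (Ioo u w)).NeBot := by
      refine mem_closure_iff_nhdsWithin_neBot.1 ?_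
      rw [closure_Ioo hw.1.ne]; exact left_mem_Icc.2 hw.1.le
    have hsub : Ioo u w ⊆ Icc u v := fun y hy => ⟨hy.1.le, hy.2.le.trans hw.2.le⟩
    have ht : Filter.Tendsto g (nhdsWithin u (Ioo u w)) (nhds (g u)) :=
      (hc.continuousWithinAt (left_mem_Icc.2 huv.le)).mono_left (nhdsWithin_mono _ hsub)
    refine le_of_tendsto ht ?_
    filter_upwards [self_mem_nhdsWithin] with y hy
    exact hm ⟨hy.1, hy.2.trans hw.2⟩ hw hy.2.le
  have hright : ∀ w ∈ Ioo u v, g w ≤ g v := by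
    intro w hw
    have hne : (nhdsWithin v (Ioo w v)).NeBot := by
      refine mem_closure_iff_nhdsWithin_neBot.1 ?_
      rw [closure_Ioo hw.2.ne]; exact right_mem_Icc.2 hw.2.le
    have hsub : Ioo w v ⊆ Icc u v := fun y hy => ⟨hw.1.le.trans hy.1.le, hy.2.le⟩
    have ht : Filter.Tendsto g (nhdsWithin v (Ioo w v)) (nhds (g v)) :=
      (hc.continuousWithinAt (right_mem_Icc.2 huv.le)).mono_left (nhdsWithin_mono _ hsub)
    refine ge_of_tendsto ht ?_
    filter_upwards [self_mem_nhdsWithin] with y hy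
    exact hm hw ⟨hw.1.trans hy.1, hy.2⟩ hy.1.le
  have huv' : g u ≤ g v := by
    have hmid : (u + v) / 2 ∈ Ioo u v := ⟨by linarith, by linarith⟩
    exact (hleft _ hmid).trans (hright _ hmid)
  intro s hs t ht hst
  rcases eq_or_lt_of_le hst with rfl | hst'
  · exact le_refl _
  · rcases eq_or_lt_of_le hs.1 with rfl | hsu
    · rcases eq_or_lt_of_le ht.2 with rfl | htv
      · exact huv'
      · exact hleft t ⟨hst', htv⟩
    · rcases eq_or_lt_of_le ht.2 with rfl | htv
      · exact hright s ⟨hsu, hst'⟩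
      · exact hm ⟨hsu, hst'.trans htv⟩ ⟨hsu.trans hst', htv⟩ hst

/-! ### Derivative-based monotonicity -/

lemma monoOn_of_deriv_sign {I : Set ℝ} {F G : ℝ → ℝ}
    (hd : ∀ t ∈ I, HasDerivWithinAt F (G t) I t)
    {S : Set ℝ} (hSI : S ⊆ I) (hS : S.OrdConnected)
    (hsgn : ∀ t ∈ S, 0 ≤ G t) : MonotoneOn F S := by
  apply monotoneOn_of_deriv_nonneg hS.convex
  · exact fun t ht => ((hd t (hSI ht)).continuousWithinAt).mono hSI
  · intro t ht
    have htI : t ∈ interior I := interior_mono hSI ht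
    exact ((hd t (interior_subset htI)).hasDerivAt
      (mem_interior_iff_mem_nhds.1 htI)).differentiableAt.differentiableWithinAt
  · intro t ht
    have htI : t ∈ interior I := interior_mono hSI ht
    rw [((hd t (interior_subset htI)).hasDerivAt (mem_interior_iff_mem_nhds.1 htI)).deriv]
    exact hsgn t (interior_subset ht)

lemma antiOn_of_deriv_sign {I : Set ℝ} {F G : ℝ → ℝ}
    (hd : ∀ t ∈ I, HasDerivWithinAt F (G t) I t)
    {S : Set ℝ} (hSI : S ⊆ I) (hS : S.OrdConnected)
    (hsgn : ∀ t ∈ S, G t ≤ 0) : AntitoneOn F S := by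
  apply antitoneOn_of_deriv_nonpos hS.convex
  · exact fun t ht => ((hd t (hSI ht)).continuousWithinAt).mono hSI
  · intro t ht
    have htI : t ∈ interior I := interior_mono hSI ht
    exact ((hd t (interior_subset htI)).hasDerivAt
      (mem_interior_iff_mem_nhds.1 htI)).differentiableAt.differentiableWithinAt
  · intro t ht
    have htI : t ∈ interior I := interior_mono hSI ht
    rw [((hd t (interior_subset htI)).hasDerivAt (mem_interior_iff_mem_nhds.1 htI)).deriv]
    exact hsgn t (interior_subset ht)

lemma strictMonoOn_of_deriv_sign {I : Set ℝ} {F G : ℝ → ℝ}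
    (hd : ∀ t ∈ I, HasDerivWithinAt F (G t) I t)
    {S : Set ℝ} (hSI : S ⊆ I) (hS : S.OrdConnected)
    (hsgn : ∀ t ∈ S, 0 < G t) : StrictMonoOn F S := by
  apply strictMonoOn_of_deriv_pos hS.convex
  · exact fun t ht => ((hd t (hSI ht)).continuousWithinAt).mono hSI
  · intro t ht
    have htI : t ∈ interior I := interior_mono hSI ht
    rw [((hd t (interior_subset htI)).hasDerivAt (mem_interior_iff_mem_nhds.1 htI)).deriv]
    exact hsgn t (interior_subset ht)

lemma strictAntiOn_of_deriv_sign {I : Set ℝ} {F G : ℝ → ℝ}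
    (hd : ∀ t ∈ I, HasDerivWithinAt F (G t) I t)
    {S : Set ℝ} (hSI : S ⊆ I) (hS : S.OrdConnected)
    (hsgn : ∀ t ∈ S, G t < 0) : StrictAntiOn F S := by
  apply strictAntiOn_of_deriv_neg hS.convex
  · exact fun t ht => ((hd t (hSI ht)).continuousWithinAt).mono hSI
  · intro t ht
    have htI : t ∈ interior I := interior_mono hSI ht
    rw [((hd t (interior_subset htI)).hasDerivAt (mem_interior_iff_mem_nhds.1 htI)).deriv]
    exact hsgn t (interior_subset ht)

lemma const_of_deriv_zero {I : Set ℝ} {F G : ℝ → ℝ}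
    (hd : ∀ t ∈ I, HasDerivWithinAt F (G t) I t)
    {S : Set ℝ} (hSI : S ⊆ I) (hS : S.OrdConnected)
    (hsgn : ∀ t ∈ S, G t = 0) : ∀ s ∈ S, ∀ t ∈ S, F s = F t := by
  have h1 := monoOn_of_deriv_sign hd hSI hS (fun t ht => (hsgn t ht).ge)
  have h2 := antiOn_of_deriv_sign hd hSI hS (fun t ht => (hsgn t ht).le)
  intro s hs t ht
  rcases le_total s t with h | h
  · exact le_antisymm (h1 hs ht h) (h2 hs ht h)
  · exact le_antisymm (h2 ht hs h) (h1 ht hs h)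

/-- IVT wrapper: a continuous function with a sign change on an ord-connected set has a zero. -/
lemma exists_zero_of_sign_change {g : ℝ → ℝ} {C : Set ℝ} (hC : C.OrdConnected)
    (hg : ContinuousOn g C) {a b : ℝ} (ha : a ∈ C) (hb : b ∈ C)
    (hga : g a < 0) (hgb : 0 < g b) : ∃ w ∈ C, g w = 0 := by
  have hsub : uIcc a b ⊆ C := hC.uIcc_subset ha hb
  have : (0 : ℝ) ∈ uIcc (g a) (g b) := by
    rw [Set.mem_uIcc]; left; exact ⟨hga.le, hgb.le⟩
  obtain ⟨w, hw, hw0⟩ := intermediate_value_uIcc (hg.mono hsub) this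
  exact ⟨w, hsub hw, hw0⟩

/-! ### Betweenness implies monotonicity -/

/-- The "no peak, no valley" betweenness property. -/
def Betw (g : ℝ → ℝ) (C : Set ℝ) : Prop :=
  ∀ x ∈ C, ∀ y ∈ C, ∀ z ∈ C, x < y → y < z →
    ¬(g x < g y ∧ g z < g y) ∧ ¬(g y < g x ∧ g y < g z)

lemma Betw.neg {g : ℝ → ℝ} {C : Set ℝ} (h : Betw g C) : Betw (fun t => -g t) C := by
  intro x hx y hy z hz hxy hyz
  obtain ⟨h1, h2⟩ := h x hx y hy z hz hxy hyz
  constructor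
  · rintro ⟨ha, hb⟩
    simp only [neg_lt_neg_iff] at ha hb
    exact h2 ⟨ha, hb⟩
  · rintro ⟨ha, hb⟩
    simp only [neg_lt_neg_iff] at ha hb
    exact h1 ⟨ha, hb⟩

private lemma quad {g : ℝ → ℝ} {C : Set ℝ} (H : Betw g C) {p q u v : ℝ}
    (hp : p ∈ C) (hq : q ∈ C) (hu : u ∈ C) (hv : v ∈ C)
    (hpq : p < q) (huv : u < v) (hd : g q < g p) (ha : g u < g v) (hpu : p ≤ u) : False := by
  rcases le_or_gt q u with hqu | huq
  · -- chain p < q ≤ u < v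
    have hqv : q < v := lt_of_le_of_lt hqu huv
    have h1 := (H p hp q hq v hv hpq hqv).2
    have hvq : g v ≤ g q := by
      by_contra hc; exact h1 ⟨hd, lt_of_not_ge hc⟩
    rcases eq_or_lt_of_le hqu with rfl | hqu'
    · linarith
    · have h2 := (H q hq u hu v hv hqu' huv).2
      have : g q ≤ g u := by
        by_contra hc; exact h2 ⟨lt_of_not_ge hc, ha⟩
      linarith
  · -- p ≤ u < q
    rcases le_or_gt q v with hqv | hvq
    · -- p ≤ u < q ≤ v
      rcases eq_or_lt_of_le hqv with rfl | hqv'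
      · -- q = v
        rcases eq_or_lt_of_le hpu with rfl | hpu'
        · linarith
        · have h2 := (H p hp u hu q hq hpu' huq).2
          have : g p ≤ g u := by
            by_contra hc; exact h2 ⟨lt_of_not_ge hc, by linarith⟩
          linarith
      · -- p ≤ u < q < v
        have h1 := (H p hp q hq v hv hpq hqv').2
        have hvq : g v ≤ g q := by
          by_contra hc; exact h1 ⟨hd, lt_of_not_ge hc⟩
        rcases eq_or_lt_of_le hvq with hvq' | hvq'
        · -- g v = g q
          rcases eq_or_lt_of_le hpu with rfl | hpu'
          · linarith
          · have h2 := (H p hp u hu q hq hpu' huq).2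
            have : g p ≤ g u := by
              by_contra hc; exact h2 ⟨lt_of_not_ge hc, by linarith⟩
            linarith
        · -- g v < g q
          have h3 := (H u hu q hq v hv huq hqv').1
          have : g q ≤ g u := by
            by_contra hc; exact h3 ⟨lt_of_not_ge hc, hvq'⟩
          linarith
    · -- p ≤ u < v < q
      have h1 := (H u hu v hv q hq huv hvq).1
      have hvle : g v ≤ g q := by
        by_contra hc; exact h1 ⟨ha, lt_of_not_ge hc⟩
      rcases eq_or_lt_of_le hpu with rfl | hpu'
      · linarith
      · have h2 := (H p hp u hu q hq hpu' (huv.trans hvq)).2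
        rcases not_and_or.1 h2 with hc | hc
        · have : g p ≤ g u := le_of_not_gt hc; linarith
        · have : g q ≤ g u := le_of_not_gt hc; linarith

/-- Betweenness on a set implies monotone or antitone. -/
lemma monoOn_of_betw {g : ℝ → ℝ} {C : Set ℝ} (H : Betw g C) : MonoOn g C := by
  by_cases hM : MonotoneOn g C
  · exact Or.inl hM
  · right
    unfold MonotoneOn at hM
    push_neg at hM
    obtain ⟨p, hp, q, hq, hpq, hgpq⟩ := hM
    have hpq' : p < q := lt_of_le_of_ne hpq (by rintro rfl; exact absurd le_rfl (not_le.2 hgpq))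
    intro u hu v hv huv
    by_contra hc
    have hguv : g u < g v := lt_of_not_ge hc
    have huv' : u < v := lt_of_le_of_ne huv (by rintro rfl; exact absurd le_rfl (not_le.2 hguv))
    rcases le_total p u with hpu | hup
    · exact quad H hp hq hu hv hpq' huv' hgpq hguv hpu
    · exact quad H.neg hu hv hp hq huv' hpq' (by simpa using hguv) (by simpa using hgpq) hup

/-! ### Platform basics -/

lemma platform_mem {g : ℝ → ℝ} {I : Set ℝ} {p : ℝ} (hp : p ∈ I) : p ∈ Platform g I p :=
  mem_connectedComponentIn ⟨hp, rfl⟩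

lemma platform_subset {g : ℝ → ℝ} {I : Set ℝ} {p : ℝ} :
    Platform g I p ⊆ {x ∈ I | g x = g p} := connectedComponentIn_subset _ _

lemma platform_ordConnected {g : ℝ → ℝ} {I : Set ℝ} {p : ℝ} :
    (Platform g I p).OrdConnected := isPreconnected_connectedComponentIn.ordConnected

lemma platform_eq_of_mem {g : ℝ → ℝ} {I : Set ℝ} {p q : ℝ}
    (hq : q ∈ Platform g I p) : Platform g I q = Platform g I p := by
  have hval : g q = g p := (platform_subset hq).2
  have hfib : {x ∈ I | g x = g q} = {x ∈ I | g x = g p} := by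
    ext t; simp [hval]
  unfold Platform
  rw [hfib]
  exact (connectedComponentIn_eq hq).symm

/-! ### The choice machinery -/

/-- Pick (at most) one element from a set. -/
noncomputable def pk (T : Set ℝ) : Set ℝ := if h : T.Nonempty then {h.some} else ∅

lemma pk_subset {T : Set ℝ} : pk T ⊆ T := by
  unfold pk; split
  · next h => intro y hy; rw [Set.mem_singleton_iff.1 hy]; exact h.some_mem
  · exact empty_subset _

lemma pk_finite {T : Set ℝ} : (pk T).Finite := by
  unfold pk; split
  · exact finite_singleton _
  · exact finite_empty

lemma pk_nonempty {T : Set ℝ} (h : T.Nonempty) : ∃ z ∈ T, pk T = {z} := by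
  refine ⟨h.some, h.some_mem, ?_⟩
  unfold pk; rw [dif_pos h]

/-- The zero set of `g` inside `S`. -/
def zset (g : ℝ → ℝ) (S : Set ℝ) : Set ℝ := {w ∈ S | g w = 0}

/-- The special points of a component `S`: a zero of `g₂`, and zeros of `g₁` in the
resulting pieces. -/
noncomputable def sp (g₁ g₂ : ℝ → ℝ) (S : Set ℝ) : Set ℝ :=
  pk (zset g₂ S) ∪
    (⋃ z ∈ pk (zset g₂ S), pk (zset g₁ (S ∩ Iio z)) ∪ pk (zset g₁ (S ∩ Ioi z))) ∪
    (if (zset g₂ S).Nonempty then ∅ else pk (zset g₁ S))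

lemma sp_subset {g₁ g₂ : ℝ → ℝ} {S : Set ℝ} : sp g₁ g₂ S ⊆ S := by
  unfold sp
  refine union_subset (union_subset ?_ ?_) ?_
  · exact pk_subset.trans (fun w hw => hw.1)
  · refine Set.iUnion₂_subset fun z hz => union_subset ?_ ?_
    · exact pk_subset.trans (fun w hw => hw.1.1)
    · exact pk_subset.trans (fun w hw => hw.1.1)
  · split
    · exact empty_subset _
    · exact pk_subset.trans (fun w hw => hw.1)

lemma sp_finite {g₁ g₂ : ℝ → ℝ} {S : Set ℝ} : (sp g₁ g₂ S).Finite := by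
  unfold sp
  refine Set.Finite.union (Set.Finite.union pk_finite ?_) ?_
  · exact Set.Finite.biUnion pk_finite (fun z _ => Set.Finite.union pk_finite pk_finite)
  · split
    · exact finite_empty
    · exact pk_finite

lemma cc_eq_of_mem_both {F : Set ℝ} {a b y : ℝ} (h1 : y ∈ connectedComponentIn F a)
    (h2 : y ∈ connectedComponentIn F b) :
    connectedComponentIn F a = connectedComponentIn F b :=
  (connectedComponentIn_eq h1).trans (connectedComponentIn_eq h2).symm

/-! ### The preliminary witness set `E₀` -/

/-- The preliminary common witness set: `K` together with (at most three) special points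
in each component of `I \ K`. -/
noncomputable def E0 (g₁ g₂ : ℝ → ℝ) (I K : Set ℝ) : Set ℝ :=
  K ∪ ⋃ x ∈ I \ K, sp g₁ g₂ (connectedComponentIn (I \ K) x)

lemma K_subset_E0 {g₁ g₂ : ℝ → ℝ} {I K : Set ℝ} : K ⊆ E0 g₁ g₂ I K := subset_union_left

lemma sp_subset_E0 {g₁ g₂ : ℝ → ℝ} {I K : Set ℝ} {x : ℝ} (hx : x ∈ I \ K) :
    sp g₁ g₂ (connectedComponentIn (I \ K) x) ⊆ E0 g₁ g₂ I K := by
  intro y hy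
  exact Or.inr (Set.mem_biUnion hx hy)

lemma E0_subset {g₁ g₂ : ℝ → ℝ} {I K : Set ℝ} (hK : K ⊆ I) : E0 g₁ g₂ I K ⊆ I := by
  refine union_subset hK (Set.iUnion₂_subset fun x hx => ?_)
  exact sp_subset.trans ((connectedComponentIn_subset _ _).trans diff_subset)

lemma E0_discrete {g₁ g₂ : ℝ → ℝ} {I K : Set ℝ} (hIo : I.OrdConnected)
    (hK : ClosedDiscreteIn K I) : ClosedDiscreteIn (E0 g₁ g₂ I K) I := by
  refine ⟨E0_subset hK.1, fun x hx => ?_⟩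
  obtain ⟨ε, hε, hKε⟩ := hK.2 x hx
  have hTm : (Ioo (x - ε) x ∩ I).OrdConnected := Set.ordConnected_Ioo.inter hIo
  have hTp : (Ioo x (x + ε) ∩ I).OrdConnected := Set.ordConnected_Ioo.inter hIo
  have hTmK : Ioo (x - ε) x ∩ I ⊆ I \ K := by
    rintro t ⟨htoo, htI⟩
    refine ⟨htI, fun htK => ?_⟩
    have : t = x := hKε t htK (by rw [abs_sub_lt_iff]; constructor <;> linarith [htoo.1, htoo.2])
    exact absurd this htoo.2.ne
  have hTpK : Ioo x (x + ε) ∩ I ⊆ I \ K := by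
    rintro t ⟨htoo, htI⟩
    refine ⟨htI, fun htK => ?_⟩
    have : t = x := hKε t htK (by rw [abs_sub_lt_iff]; constructor <;> linarith [htoo.1, htoo.2])
    exact absurd this htoo.1.ne'
  set Sm : Set ℝ := if h : (Ioo (x - ε) x ∩ I).Nonempty then
      sp g₁ g₂ (connectedComponentIn (I \ K) h.some) else ∅ with hSm
  set Sp : Set ℝ := if h : (Ioo x (x + ε) ∩ I).Nonempty then
      sp g₁ g₂ (connectedComponentIn (I \ K) h.some) else ∅ with hSp
  set Sx : Set ℝ := if x ∈ I \ K then sp g₁ g₂ (connectedComponentIn (I \ K) x) else ∅ with hSx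
  have hF : ({x} ∪ Sm ∪ Sp ∪ Sx).Finite := by
    refine (((finite_singleton x).union ?_).union ?_).union ?_
    · rw [hSm]; split
      · exact sp_finite
      · exact finite_empty
    · rw [hSp]; split
      · exact sp_finite
      · exact finite_empty
    · rw [hSx]; split
      · exact sp_finite
      · exact finite_empty
  refine shrink hε hF ?_
  intro y hy hyx
  rcases hy with hyK | hysp
  · exact Or.inl (Or.inl (Or.inl (hKε y hyK hyx)))
  · obtain ⟨x', hx', hy'⟩ := Set.mem_iUnion₂.1 hysp
    have hyS : y ∈ connectedComponentIn (I \ K) x' := sp_subset hy'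
    have hyIK : y ∈ I \ K := connectedComponentIn_subset _ _ hyS
    rcases lt_trichotomy y x with hlt | rfl | hgt
    · have hyT : y ∈ Ioo (x - ε) x ∩ I := by
        refine ⟨⟨?_, hlt⟩, hyIK.1⟩
        have := abs_sub_lt_iff.1 hyx; linarith [this.1, this.2]
      have hne : (Ioo (x - ε) x ∩ I).Nonempty := ⟨y, hyT⟩
      have hcc : y ∈ connectedComponentIn (I \ K) hne.some := by
        refine IsPreconnected.subset_connectedComponentIn ?_ hne.some_mem hTmK hyT
        exact hTm.isPreconnected
      have : sp g₁ g₂ (connectedComponentIn (I \ K) x') = Sm := by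
        rw [hSm, dif_pos hne, cc_eq_of_mem_both hyS hcc]
      exact Or.inl (Or.inl (Or.inr (this ▸ hy')))
    · refine Or.inr ?_
      rw [hSx, if_pos hyIK]
      rwa [cc_eq_of_mem_both hyS (mem_connectedComponentIn hyIK)] at hy'
    · have hyT : y ∈ Ioo x (x + ε) ∩ I := by
        refine ⟨⟨hgt, ?_⟩, hyIK.1⟩
        have := abs_sub_lt_iff.1 hyx; linarith [this.1, this.2]
      have hne : (Ioo x (x + ε) ∩ I).Nonempty := ⟨y, hyT⟩
      have hcc : y ∈ connectedComponentIn (I \ K) hne.some := by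
        refine IsPreconnected.subset_connectedComponentIn ?_ hne.some_mem hTpK hyT
        exact hTp.isPreconnected
      have : sp g₁ g₂ (connectedComponentIn (I \ K) x') = Sp := by
        rw [hSp, dif_pos hne, cc_eq_of_mem_both hyS hcc]
      exact Or.inl (Or.inr (this ▸ hy'))

/-! ### The analytic setting -/

structure Setting (I : Set ℝ) (f g₁ g₂ : ℝ → ℝ) : Prop where
  ordConn : I.OrdConnected
  d1 : ∀ t ∈ I, HasDerivWithinAt f (g₁ t) I t
  d2 : ∀ t ∈ I, HasDerivWithinAt g₁ (g₂ t) I t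
  c2 : ContinuousOn g₂ I

lemma Setting.c1 {I : Set ℝ} {f g₁ g₂ : ℝ → ℝ} (hs : Setting I f g₁ g₂) :
    ContinuousOn g₁ I := fun t ht => (hs.d2 t ht).continuousWithinAt

lemma Setting.c0 {I : Set ℝ} {f g₁ g₂ : ℝ → ℝ} (hs : Setting I f g₁ g₂) :
    ContinuousOn f I := fun t ht => (hs.d1 t ht).continuousWithinAt

/-- A set avoiding a point lies entirely on one side of it (if ord-connected). -/
lemma side_of_not_mem {C : Set ℝ} (hC : C.OrdConnected) {z : ℝ} (hz : z ∉ C) :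
    (∀ w ∈ C, w < z) ∨ (∀ w ∈ C, z < w) := by
  by_cases hex : ∃ w ∈ C, z < w
  · obtain ⟨w', hw', hzw'⟩ := hex
    refine Or.inr fun w hw => ?_
    rcases lt_trichotomy w z with h | rfl | h
    · exact absurd (hC.out hw hw' ⟨h.le, hzw'.le⟩) hz
    · exact absurd hw hz
    · exact h
  · push_neg at hex
    refine Or.inl fun w hw => ?_
    rcases lt_trichotomy w z with h | rfl | h
    · exact h
    · exact absurd hw hz
    · exact absurd h (not_lt.2 (hex w hw))

/-- If `g` is monotone on `Q`, vanishes at `z ∈ Q`, and `C ⊆ Q` avoids `z`, then `g`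
cannot change sign (negative to positive) on `C`. -/
lemma side_sign_contra {g : ℝ → ℝ} {Q C : Set ℝ} (hC : C.OrdConnected) (hQC : C ⊆ Q)
    {z s t : ℝ} (hzQ : z ∈ Q) (hzC : z ∉ C) (hz : g z = 0) (hmono : MonoOn g Q)
    (hsC : s ∈ C) (htC : t ∈ C) (hgs : g s < 0) (hgt : 0 < g t) : False := by
  rcases side_of_not_mem hC hzC with hall | hall
  · rcases hmono with hm | hm
    · have := hm (hQC htC) hzQ (hall t htC).le
      rw [hz] at this; linarith
    · have := hm (hQC hsC) hzQ (hall s hsC).le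
      rw [hz] at this; linarith
  · rcases hmono with hm | hm
    · have := hm hzQ (hQC hsC) (hall s hsC).le
      rw [hz] at this; linarith
    · have := hm hzQ (hQC htC) (hall t htC).le
      rw [hz] at this; linarith

/-- Per-component properties of `E₀`. -/
lemma compProps {I : Set ℝ} {f g₁ g₂ : ℝ → ℝ} (hs : Setting I f g₁ g₂)
    {K : Set ℝ} (hW : Witnesses g₂ I K) :
    ∀ x ∈ I \ E0 g₁ g₂ I K,
      MonoOn g₂ (connectedComponentIn (I \ E0 g₁ g₂ I K) x) ∧
      (∀ s ∈ connectedComponentIn (I \ E0 g₁ g₂ I K) x,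
        ∀ t ∈ connectedComponentIn (I \ E0 g₁ g₂ I K) x, ¬(g₂ s < 0 ∧ 0 < g₂ t)) ∧
      (∀ s ∈ connectedComponentIn (I \ E0 g₁ g₂ I K) x,
        ∀ t ∈ connectedComponentIn (I \ E0 g₁ g₂ I K) x, ¬(g₁ s < 0 ∧ 0 < g₁ t)) := by
  intro x hx
  set E₀ := E0 g₁ g₂ I K with hE₀
  have hxK : x ∈ I \ K := ⟨hx.1, fun h => hx.2 (K_subset_E0 h)⟩
  set C₀ := connectedComponentIn (I \ E₀) x with hC₀def
  set S' := connectedComponentIn (I \ K) x with hS'def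
  have hC₀S : C₀ ⊆ S' := connectedComponentIn_mono x (diff_subset_diff_right K_subset_E0)
  have hS'I : S' ⊆ I := (connectedComponentIn_subset _ _).trans diff_subset
  have hC₀I : C₀ ⊆ I := hC₀S.trans hS'I
  have hC₀ord : C₀.OrdConnected := isPreconnected_connectedComponentIn.ordConnected
  have hS'ord : S'.OrdConnected := isPreconnected_connectedComponentIn.ordConnected
  have hC₀E : ∀ w ∈ C₀, w ∉ E₀ := fun w hw => (connectedComponentIn_subset _ _ hw).2
  have hmonoS : MonoOn g₂ S' := hW.2 x hxK
  refine ⟨?_, ?_, ?_⟩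
  · rcases hmonoS with hm | hm
    · exact Or.inl (hm.mono hC₀S)
    · exact Or.inr (hm.mono hC₀S)
  · rintro s hsC t htC ⟨hgs, hgt⟩
    obtain ⟨w, hwC, hw0⟩ := exists_zero_of_sign_change hC₀ord (hs.c2.mono hC₀I) hsC htC hgs hgt
    have hne : (zset g₂ S').Nonempty := ⟨w, hC₀S hwC, hw0⟩
    obtain ⟨z₂, hz₂mem, hpk⟩ := pk_nonempty hne
    have hz₂E : z₂ ∈ E₀ := by
      refine sp_subset_E0 hxK ?_
      unfold sp; rw [hpk]
      exact Or.inl (Or.inl rfl)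
    exact side_sign_contra hC₀ord hC₀S hz₂mem.1 (fun h => hC₀E z₂ h hz₂E) hz₂mem.2
      hmonoS hsC htC hgs hgt
  · rintro s hsC t htC ⟨hgs, hgt⟩
    obtain ⟨w, hwC, hw0⟩ := exists_zero_of_sign_change hC₀ord (hs.c1.mono hC₀I) hsC htC hgs hgt
    by_cases hne : (zset g₂ S').Nonempty
    · obtain ⟨z₂, hz₂mem, hpk⟩ := pk_nonempty hne
      have hz₂E : z₂ ∈ E₀ := by
        refine sp_subset_E0 hxK ?_
        unfold sp; rw [hpk]
        exact Or.inl (Or.inl rfl)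
      have hz₂C : z₂ ∉ C₀ := fun h => hC₀E z₂ h hz₂E
      rcases side_of_not_mem hC₀ord hz₂C with hside | hside
      · -- C₀ lies left of z₂; Q := S' ∩ Iio z₂
        set Q := S' ∩ Iio z₂ with hQdef
        have hQI : Q ⊆ I := inter_subset_left.trans hS'I
        have hQord : Q.OrdConnected := hS'ord.inter Set.ordConnected_Iio
        have hCQ : C₀ ⊆ Q := fun w' hw' => ⟨hC₀S hw', hside w' hw'⟩
        have hmQ : MonoOn g₁ Q := by
          rcases hmonoS with hm | hm
          · refine Or.inr (antiOn_of_deriv_sign hs.d2 hQI hQord fun t' ht' => ?_)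
            have := hm ht'.1 hz₂mem.1 ht'.2.le
            rw [hz₂mem.2] at this; exact this
          · refine Or.inl (monoOn_of_deriv_sign hs.d2 hQI hQord fun t' ht' => ?_)
            have := hm ht'.1 hz₂mem.1 ht'.2.le
            rw [hz₂mem.2] at this; exact this
        have hne1 : (zset g₁ Q).Nonempty := ⟨w, hCQ hwC, hw0⟩
        obtain ⟨z₁, hz₁mem, hpk1⟩ := pk_nonempty hne1
        have hz₁E : z₁ ∈ E₀ := by
          refine sp_subset_E0 hxK ?_
          unfold sp
          refine Or.inl (Or.inr ?_)
          refine Set.mem_biUnion (show z₂ ∈ pk (zset g₂ S') by rw [hpk]; rfl) ?_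
          rw [hpk1]; exact Or.inl rfl
        exact side_sign_contra hC₀ord hCQ hz₁mem.1 (fun h => hC₀E z₁ h hz₁E) hz₁mem.2
          hmQ hsC htC hgs hgt
      · -- C₀ lies right of z₂; Q := S' ∩ Ioi z₂
        set Q := S' ∩ Ioi z₂ with hQdef
        have hQI : Q ⊆ I := inter_subset_left.trans hS'I
        have hQord : Q.OrdConnected := hS'ord.inter Set.ordConnected_Ioi
        have hCQ : C₀ ⊆ Q := fun w' hw' => ⟨hC₀S hw', hside w' hw'⟩
        have hmQ : MonoOn g₁ Q := by
          rcases hmonoS with hm | hm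
          · refine Or.inl (monoOn_of_deriv_sign hs.d2 hQI hQord fun t' ht' => ?_)
            have := hm hz₂mem.1 ht'.1 ht'.2.le
            rw [hz₂mem.2] at this; exact this
          · refine Or.inr (antiOn_of_deriv_sign hs.d2 hQI hQord fun t' ht' => ?_)
            have := hm hz₂mem.1 ht'.1 ht'.2.le
            rw [hz₂mem.2] at this; exact this
        have hne1 : (zset g₁ Q).Nonempty := ⟨w, hCQ hwC, hw0⟩
        obtain ⟨z₁, hz₁mem, hpk1⟩ := pk_nonempty hne1
        have hz₁E : z₁ ∈ E₀ := by
          refine sp_subset_E0 hxK ?_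
          unfold sp
          refine Or.inl (Or.inr ?_)
          refine Set.mem_biUnion (show z₂ ∈ pk (zset g₂ S') by rw [hpk]; rfl) ?_
          rw [hpk1]; exact Or.inr rfl
        exact side_sign_contra hC₀ord hCQ hz₁mem.1 (fun h => hC₀E z₁ h hz₁E) hz₁mem.2
          hmQ hsC htC hgs hgt
    · -- no zero of g₂ in S'
      have hsgn : (∀ t' ∈ S', 0 ≤ g₂ t') ∨ (∀ t' ∈ S', g₂ t' ≤ 0) := by
        by_cases hpos : ∀ t' ∈ S', 0 ≤ g₂ t'
        · exact Or.inl hpos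
        · push_neg at hpos
          obtain ⟨t₁, ht₁, ht₁'⟩ := hpos
          refine Or.inr fun t' ht' => ?_
          by_contra hc
          obtain ⟨w', hw', hw0'⟩ := exists_zero_of_sign_change hS'ord (hs.c2.mono hS'I)
            ht₁ ht' ht₁' (lt_of_not_ge hc)
          exact hne ⟨w', hw', hw0'⟩
      have hmQ : MonoOn g₁ S' := by
        rcases hsgn with h | h
        · exact Or.inl (monoOn_of_deriv_sign hs.d2 hS'I hS'ord h)
        · exact Or.inr (antiOn_of_deriv_sign hs.d2 hS'I hS'ord h)
      have hne1 : (zset g₁ S').Nonempty := ⟨w, hC₀S hwC, hw0⟩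
      obtain ⟨z₁, hz₁mem, hpk1⟩ := pk_nonempty hne1
      have hz₁E : z₁ ∈ E₀ := by
        refine sp_subset_E0 hxK ?_
        unfold sp
        refine Or.inr ?_
        rw [if_neg hne, hpk1]; rfl
      exact side_sign_contra hC₀ord hC₀S hz₁mem.1 (fun h => hC₀E z₁ h hz₁E) hz₁mem.2
        hmQ hsC htC hgs hgt

/-! ### Pruning: one representative per platform -/

/-- Representative of a platform: a zero of `g₁` if there is one, else a point of `E₀`. -/
noncomputable def rep (g₁ : ℝ → ℝ) (E₀ P : Set ℝ) : ℝ :=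
  if h : (zset g₁ P).Nonempty then h.some
  else if h2 : (E₀ ∩ P).Nonempty then h2.some else 0

/-- The pruned witness set. -/
noncomputable def prune (g₁ g₂ : ℝ → ℝ) (I E₀ : Set ℝ) : Set ℝ :=
  (fun e => rep g₁ E₀ (Platform g₂ I e)) '' E₀

lemma rep_mem {g₁ : ℝ → ℝ} {E₀ P : Set ℝ} (h : (E₀ ∩ P).Nonempty) : rep g₁ E₀ P ∈ P := by
  unfold rep
  split
  · next h1 => exact h1.some_mem.1
  · exact h.some_mem.2

lemma rep_zero {g₁ : ℝ → ℝ} {E₀ P : Set ℝ} (h : (zset g₁ P).Nonempty) :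
    rep g₁ E₀ P ∈ P ∧ g₁ (rep g₁ E₀ P) = 0 := by
  unfold rep
  rw [dif_pos h]
  exact ⟨h.some_mem.1, h.some_mem.2⟩

lemma prune_subset {g₁ g₂ : ℝ → ℝ} {I E₀ : Set ℝ} (hE₀I : E₀ ⊆ I) :
    prune g₁ g₂ I E₀ ⊆ I := by
  rintro y ⟨e, he, rfl⟩
  have : (E₀ ∩ Platform g₂ I e).Nonempty := ⟨e, he, platform_mem (hE₀I he)⟩
  exact (platform_subset (rep_mem this)).1

/-- Each point of the pruned set lies on the platform it represents. -/
lemma prune_mem_platform {g₁ g₂ : ℝ → ℝ} {I E₀ : Set ℝ} (hE₀I : E₀ ⊆ I) {e : ℝ}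
    (he : e ∈ E₀) : rep g₁ E₀ (Platform g₂ I e) ∈ Platform g₂ I e :=
  rep_mem ⟨e, he, platform_mem (hE₀I he)⟩

/-- The pruned set has at most one point on each platform of `g₂`. -/
lemma prune_unique {g₁ g₂ : ℝ → ℝ} {I E₀ : Set ℝ} (hE₀I : E₀ ⊆ I) {p : ℝ}
    {a b : ℝ} (ha : a ∈ prune g₁ g₂ I E₀ ∩ Platform g₂ I p)
    (hb : b ∈ prune g₁ g₂ I E₀ ∩ Platform g₂ I p) : a = b := by
  obtain ⟨⟨ea, hea, rfl⟩, haP⟩ := ha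
  obtain ⟨⟨eb, heb, rfl⟩, hbP⟩ := hb
  have h1 : Platform g₂ I (rep g₁ E₀ (Platform g₂ I ea)) = Platform g₂ I ea :=
    platform_eq_of_mem (prune_mem_platform hE₀I hea)
  have h2 : Platform g₂ I (rep g₁ E₀ (Platform g₂ I eb)) = Platform g₂ I eb :=
    platform_eq_of_mem (prune_mem_platform hE₀I heb)
  have h3 : Platform g₂ I (rep g₁ E₀ (Platform g₂ I ea)) = Platform g₂ I p :=
    platform_eq_of_mem haP
  have h4 : Platform g₂ I (rep g₁ E₀ (Platform g₂ I eb)) = Platform g₂ I p :=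
    platform_eq_of_mem hbP
  show rep g₁ E₀ (Platform g₂ I ea) = rep g₁ E₀ (Platform g₂ I eb)
  rw [h1] at h3; rw [h2] at h4
  rw [h3, h4]

/-- Discreteness of the pruned set. -/
lemma prune_discrete {g₁ g₂ : ℝ → ℝ} {I E₀ : Set ℝ}
    (hE₀ : ClosedDiscreteIn E₀ I) : ClosedDiscreteIn (prune g₁ g₂ I E₀) I := by
  refine ⟨prune_subset hE₀.1, fun x hx => ?_⟩
  obtain ⟨ε, hε, hEε⟩ := hE₀.2 x hx
  set F : Set ℝ := {rep g₁ E₀ (Platform g₂ I x), rep g₁ E₀ (Platform g₂ I (x + ε / 2)),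
    rep g₁ E₀ (Platform g₂ I (x - ε / 2))} with hFdef
  have hFfin : F.Finite := (finite_singleton _).insert _ |>.insert _
  refine shrink (by linarith : (0:ℝ) < ε / 2) hFfin ?_
  rintro y ⟨e, he, rfl⟩ hyx
  have heI : e ∈ I := hE₀.1 he
  have hyP : rep g₁ E₀ (Platform g₂ I e) ∈ Platform g₂ I e := prune_mem_platform hE₀.1 he
  rcases eq_or_ne e x with rfl | hex
  · exact Or.inl rfl
  · have heε : ε ≤ |e - x| := by
      by_contra hc
      exact hex (hEε e he (lt_of_not_ge hc))
    rcases abs_sub_lt_iff.1 hyx with ⟨hy1, hy2⟩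
    rcases le_or_gt x e with hxe | hxe
    · -- e ≥ x + ε
      have hxe' : x + ε ≤ e := by
        rcases abs_sub_le_iff.1 (le_refl |e - x|) with _
        have : e - x = |e - x| := (abs_of_nonneg (by linarith)).symm
        linarith [heε, this ▸ le_refl (e-x)]
      have hmid : x + ε / 2 ∈ Platform g₂ I e := by
        refine (platform_ordConnected).out hyP (platform_mem heI) ⟨?_, ?_⟩ <;> linarith
      have : Platform g₂ I (x + ε / 2) = Platform g₂ I e := platform_eq_of_mem hmid
      right; left; rw [this]
    · -- e ≤ x - ε
      have hxe' : e ≤ x - ε := by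
        have : x - e = |e - x| := by rw [abs_sub_comm]; exact (abs_of_nonneg (by linarith)).symm
        linarith
      have hmid : x - ε / 2 ∈ Platform g₂ I e := by
        refine (platform_ordConnected).out (platform_mem heI) hyP ⟨?_, ?_⟩ <;> linarith
      have : Platform g₂ I (x - ε / 2) = Platform g₂ I e := platform_eq_of_mem hmid
      right; right; rw [this]; exact rfl

/-! ### Merged components: sign and monotonicity control -/

def SameSignOn (g : ℝ → ℝ) (T : Set ℝ) : Prop :=
  ∀ s ∈ T, ∀ t ∈ T, (g s < 0 → g t < 0) ∧ (0 < g s → 0 < g t)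

lemma SameSignOn.neg {g : ℝ → ℝ} {T : Set ℝ} (h : SameSignOn g T) :
    SameSignOn (fun t => -g t) T := by
  intro s hsT t htT
  refine ⟨fun hs => ?_, fun hs => ?_⟩
  · have hs' : 0 < g s := by simpa using hs
    simpa [neg_lt_zero] using (h s hsT t htT).2 hs'
  · have hs' : g s < 0 := by simpa [neg_pos] using hs
    simpa [neg_pos] using (h s hsT t htT).1 hs'

lemma MonoOn.neg' {g : ℝ → ℝ} {S : Set ℝ} (h : MonoOn g S) :
    MonoOn (fun t => -g t) S := by
  rcases h with hm | hm
  · exact Or.inr (fun a ha b hb hab => by simp only [neg_le_neg_iff]; exact hm ha hb hab)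
  · exact Or.inl (fun a ha b hb hab => by simp only [neg_le_neg_iff]; exact hm ha hb hab)

lemma monoOn_Icc_of_Ioo {g : ℝ → ℝ} {u v : ℝ} (huv : u < v)
    (hc : ContinuousOn g (Icc u v)) (hm : MonoOn g (Ioo u v)) : MonoOn g (Icc u v) := by
  rcases hm with h | h
  · exact Or.inl (monotoneOn_Icc_of_Ioo huv hc h)
  · have : MonotoneOn (fun t => -g t) (Icc u v) := by
      refine monotoneOn_Icc_of_Ioo huv (hc.neg) ?_
      intro a ha b hb hab
      simp only [neg_le_neg_iff]
      exact h ha hb hab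
    refine Or.inr fun a ha b hb hab => ?_
    have := this ha hb hab
    simpa using this

/-- Main lemma: on a merged component, `g` cannot change sign from negative to positive
(ordered version). -/
lemma no_sign_change_aux {I E₀ : Set ℝ} {g : ℝ → ℝ} {C : Set ℝ}
    (hC : C.OrdConnected) (hCI : C ⊆ I) (hg : ContinuousOn g I)
    (hfin : ∀ a b : ℝ, a ∈ C → b ∈ C → (E₀ ∩ Icc a b).Finite)
    (hside : ∀ e ∈ E₀ ∩ C, SameSignOn g (C ∩ Iic e) ∨ SameSignOn g (C ∩ Ici e))
    (hcomp : ∀ m ∈ I, m ∉ E₀ → ∀ s ∈ connectedComponentIn (I \ E₀) m,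
      ∀ t ∈ connectedComponentIn (I \ E₀) m, ¬(g s < 0 ∧ 0 < g t))
    {x z : ℝ} (hx : x ∈ C) (hz : z ∈ C) (hxz : x < z)
    (hgx : g x < 0) (hgz : 0 < g z) : False := by
  classical
  set F : Set ℝ := E₀ ∩ Icc x z with hFdef
  have hFfin : F.Finite := hfin x z hx hz
  have hFC : ∀ e ∈ F, e ∈ C := fun e he => hC.out hx hz he.2
  have hLR : ∀ e ∈ F, (∀ t ∈ C ∩ Iic e, g t < 0) ∨ (∀ t ∈ C ∩ Ici e, 0 < g t) := by
    intro e he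
    rcases hside e ⟨he.1, hFC e he⟩ with hss | hss
    · exact Or.inl fun t ht => (hss x ⟨hx, he.2.1⟩ t ht).1 hgx
    · exact Or.inr fun t ht => (hss z ⟨hz, he.2.2⟩ t ht).2 hgz
  set FL : Set ℝ := {e ∈ F | ∀ t ∈ C ∩ Iic e, g t < 0} with hFLdef
  set FR : Set ℝ := {e ∈ F | ∀ t ∈ C ∩ Ici e, 0 < g t} with hFRdef
  have hFLfin : FL.Finite := hFfin.subset (sep_subset _ _)
  have hFRfin : FR.Finite := hFfin.subset (sep_subset _ _)
  obtain ⟨u, huC, hgu, hxu, huz, huB, huD⟩ :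
      ∃ u, u ∈ C ∧ g u < 0 ∧ x ≤ u ∧ u ≤ z ∧ (∀ e ∈ FL, e ≤ u) ∧ (u ∈ FL ∨ u = x) := by
    by_cases hne : FL.Nonempty
    · have hne' : hFLfin.toFinset.Nonempty := by rwa [Set.Finite.toFinset_nonempty]
      set u := hFLfin.toFinset.max' hne' with hudef
      have huFL : u ∈ FL := hFLfin.mem_toFinset.1 (hFLfin.toFinset.max'_mem hne')
      refine ⟨u, hFC u huFL.1, huFL.2 u ⟨hFC u huFL.1, le_refl u⟩, huFL.1.2.1, huFL.1.2.2,
        ?_, Or.inl huFL⟩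
      intro e he
      exact hFLfin.toFinset.le_max' e (hFLfin.mem_toFinset.2 he)
    · exact ⟨x, hx, hgx, le_refl x, hxz.le, fun e he => absurd ⟨e, he⟩ hne, Or.inr rfl⟩
  obtain ⟨v, hvC, hgv, hxv, hvz, hvB, hvD⟩ :
      ∃ v, v ∈ C ∧ 0 < g v ∧ x ≤ v ∧ v ≤ z ∧ (∀ e ∈ FR, v ≤ e) ∧ (v ∈ FR ∨ v = z) := by
    by_cases hne : FR.Nonempty
    · have hne' : hFRfin.toFinset.Nonempty := by rwa [Set.Finite.toFinset_nonempty]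
      set v := hFRfin.toFinset.min' hne' with hvdef
      have hvFR : v ∈ FR := hFRfin.mem_toFinset.1 (hFRfin.toFinset.min'_mem hne')
      refine ⟨v, hFC v hvFR.1, hvFR.2 v ⟨hFC v hvFR.1, le_refl v⟩, hvFR.1.2.1, hvFR.1.2.2,
        ?_, Or.inl hvFR⟩
      intro e he
      exact hFRfin.toFinset.min'_le e (hFRfin.mem_toFinset.2 he)
    · exact ⟨z, hz, hgz, hxz.le, le_refl z, fun e he => absurd ⟨e, he⟩ hne, Or.inr rfl⟩
  have huv : u < v := by
    by_contra hcon
    push_neg at hcon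
    rcases hvD with hvFR | rfl
    · have := hvFR.2 u ⟨huC, hcon⟩
      linarith
    · have : u = v := le_antisymm huz hcon
      subst this
      linarith
  have hIooE : ∀ w ∈ Ioo u v, w ∉ E₀ := by
    intro w hw hwE
    have hwF : w ∈ F := ⟨hwE, hxu.trans hw.1.le, hw.2.le.trans hvz⟩
    rcases hLR w hwF with h | h
    · exact absurd (huB w ⟨hwF, h⟩) (not_le.2 hw.1)
    · exact absurd (hvB w ⟨hwF, h⟩) (not_le.2 hw.2)
  have hIooC : Ioo u v ⊆ C := fun w hw => hC.out huC hvC ⟨hw.1.le, hw.2.le⟩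
  have hIooIE : Ioo u v ⊆ I \ E₀ := fun w hw => ⟨hCI (hIooC hw), hIooE w hw⟩
  have hnb : (nhdsWithin u (Ioo u v)).NeBot := by
    refine mem_closure_iff_nhdsWithin_neBot.1 ?_
    rw [closure_Ioo huv.ne]
    exact left_mem_Icc.2 huv.le
  have hnb' : (nhdsWithin v (Ioo u v)).NeBot := by
    refine mem_closure_iff_nhdsWithin_neBot.1 ?_
    rw [closure_Ioo huv.ne]
    exact right_mem_Icc.2 huv.le
  obtain ⟨u', hu'neg, hu'm⟩ : ∃ u', g u' < 0 ∧ u' ∈ Ioo u v := by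
    have hcw : ContinuousWithinAt g I u := hg.continuousWithinAt (hCI huC)
    have h1 : g ⁻¹' Iio 0 ∈ nhdsWithin u I := hcw (isOpen_Iio.mem_nhds (by simpa using hgu))
    have h2 : g ⁻¹' Iio 0 ∈ nhdsWithin u (Ioo u v) :=
      nhdsWithin_mono u (hIooC.trans hCI) h1
    obtain ⟨u', h1', h2'⟩ := Filter.nonempty_of_mem (Filter.inter_mem h2 self_mem_nhdsWithin)
    exact ⟨u', h1', h2'⟩
  obtain ⟨v', hv'pos, hv'm⟩ : ∃ v', 0 < g v' ∧ v' ∈ Ioo u v := by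
    have hcw : ContinuousWithinAt g I v := hg.continuousWithinAt (hCI hvC)
    have h1 : g ⁻¹' Ioi 0 ∈ nhdsWithin v I := hcw (isOpen_Ioi.mem_nhds (by simpa using hgv))
    have h2 : g ⁻¹' Ioi 0 ∈ nhdsWithin v (Ioo u v) :=
      nhdsWithin_mono v (hIooC.trans hCI) h1
    obtain ⟨v', h1', h2'⟩ := Filter.nonempty_of_mem (Filter.inter_mem h2 self_mem_nhdsWithin)
    exact ⟨v', h1', h2'⟩
  have hu'IE : u' ∈ I \ E₀ := hIooIE hu'm
  have hsub2 : Ioo u v ⊆ connectedComponentIn (I \ E₀) u' :=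
    isPreconnected_Ioo.subset_connectedComponentIn hu'm hIooIE
  exact hcomp u' hu'IE.1 hu'IE.2 u' (hsub2 hu'm) v' (hsub2 hv'm) ⟨hu'neg, hv'pos⟩

/-- Unordered version of `no_sign_change_aux`. -/
lemma no_sign_change {I E₀ : Set ℝ} {g : ℝ → ℝ} {C : Set ℝ}
    (hC : C.OrdConnected) (hCI : C ⊆ I) (hg : ContinuousOn g I)
    (hfin : ∀ a b : ℝ, a ∈ C → b ∈ C → (E₀ ∩ Icc a b).Finite)
    (hside : ∀ e ∈ E₀ ∩ C, SameSignOn g (C ∩ Iic e) ∨ SameSignOn g (C ∩ Ici e))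
    (hcomp : ∀ m ∈ I, m ∉ E₀ → ∀ s ∈ connectedComponentIn (I \ E₀) m,
      ∀ t ∈ connectedComponentIn (I \ E₀) m, ¬(g s < 0 ∧ 0 < g t)) :
    ∀ s ∈ C, ∀ t ∈ C, ¬(g s < 0 ∧ 0 < g t) := by
  rintro s hs t ht ⟨h1, h2⟩
  rcases lt_trichotomy s t with h | rfl | h
  · exact no_sign_change_aux hC hCI hg hfin hside hcomp hs ht h h1 h2
  · linarith
  · refine no_sign_change_aux (g := fun w => -g w) hC hCI hg.neg hfin
      (fun e he => ?_) (fun m hm hm' s' hs' t' ht' => ?_) ht hs h (by simpa using h2)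
      (by simpa using h1)
    · rcases hside e he with hss | hss
      · exact Or.inl hss.neg
      · exact Or.inr hss.neg
    · rintro ⟨ha, hb⟩
      simp only [neg_lt_zero, lt_neg, neg_zero] at ha hb
      exact hcomp m hm hm' t' ht' s' hs' ⟨by linarith, by linarith⟩

/-- On a merged component, `g` has no strict peak. -/
lemma no_peak_aux {E₀ : Set ℝ} {g : ℝ → ℝ} {C : Set ℝ}
    (hC : C.OrdConnected)
    (hfin : ∀ a b : ℝ, a ∈ C → b ∈ C → (E₀ ∩ Icc a b).Finite)
    (hconst : ∀ e ∈ E₀ ∩ C, (∀ t ∈ C ∩ Iic e, g t = g e) ∨ (∀ t ∈ C ∩ Ici e, g t = g e))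
    (hmono2 : ∀ u v, u ∈ C → v ∈ C → u < v → (∀ w ∈ Ioo u v, w ∉ E₀) →
      MonoOn g (Icc u v))
    {x y z : ℝ} (hx : x ∈ C) (hy : y ∈ C) (hz : z ∈ C) (hxy : x < y) (hyz : y < z)
    (hgxy : g x < g y) (hgzy : g z < g y) : False := by
  classical
  set F : Set ℝ := E₀ ∩ Icc x z with hFdef
  have hFfin : F.Finite := hfin x z hx hz
  have hFC : ∀ e ∈ F, e ∈ C := fun e he => hC.out hx hz he.2
  have hdi : ∀ e ∈ F, (e < y ∧ ∀ t ∈ C ∩ Iic e, g t = g e) ∨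
      (y < e ∧ ∀ t ∈ C ∩ Ici e, g t = g e) := by
    intro e he
    rcases hconst e ⟨he.1, hFC e he⟩ with hl | hr
    · refine Or.inl ⟨?_, hl⟩
      by_contra hc
      push_neg at hc
      have h1 := hl x ⟨hx, he.2.1⟩
      have h2 := hl y ⟨hy, hc⟩
      rw [← h2] at h1
      linarith
    · refine Or.inr ⟨?_, hr⟩
      by_contra hc
      push_neg at hc
      have h1 := hr z ⟨hz, he.2.2⟩
      have h2 := hr y ⟨hy, hc⟩
      rw [← h2] at h1
      linarith
  set FL : Set ℝ := F ∩ Iio y with hFLdef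
  set FR : Set ℝ := F ∩ Ioi y with hFRdef
  have hFLfin : FL.Finite := hFfin.subset inter_subset_left
  have hFRfin : FR.Finite := hFfin.subset inter_subset_left
  obtain ⟨u, huC, hgu, hxu, huy, huB⟩ :
      ∃ u, u ∈ C ∧ g u = g x ∧ x ≤ u ∧ u < y ∧ ∀ e ∈ FL, e ≤ u := by
    by_cases hne : FL.Nonempty
    · have hne' : hFLfin.toFinset.Nonempty := by rwa [Set.Finite.toFinset_nonempty]
      set u := hFLfin.toFinset.max' hne' with hudef
      have huFL : u ∈ FL := hFLfin.mem_toFinset.1 (hFLfin.toFinset.max'_mem hne')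
      have huconst : ∀ t ∈ C ∩ Iic u, g t = g u := by
        rcases hdi u huFL.1 with h | h
        · exact h.2
        · exact absurd huFL.2 (not_lt.2 h.1.le)
      refine ⟨u, hFC u huFL.1, (huconst x ⟨hx, huFL.1.2.1⟩).symm, huFL.1.2.1, huFL.2, ?_⟩
      intro e he
      exact hFLfin.toFinset.le_max' e (hFLfin.mem_toFinset.2 he)
    · exact ⟨x, hx, rfl, le_refl x, hxy, fun e he => absurd ⟨e, he⟩ hne⟩
  obtain ⟨v, hvC, hgv, hvz, hyv, hvB⟩ :
      ∃ v, v ∈ C ∧ g v = g z ∧ v ≤ z ∧ y < v ∧ ∀ e ∈ FR, v ≤ e := by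
    by_cases hne : FR.Nonempty
    · have hne' : hFRfin.toFinset.Nonempty := by rwa [Set.Finite.toFinset_nonempty]
      set v := hFRfin.toFinset.min' hne' with hvdef
      have hvFR : v ∈ FR := hFRfin.mem_toFinset.1 (hFRfin.toFinset.min'_mem hne')
      have hvconst : ∀ t ∈ C ∩ Ici v, g t = g v := by
        rcases hdi v hvFR.1 with h | h
        · exact absurd hvFR.2 (not_lt.2 h.1.le)
        · exact h.2
      refine ⟨v, hFC v hvFR.1, (hvconst z ⟨hz, hvFR.1.2.2⟩).symm, hvFR.1.2.2, hvFR.2, ?_⟩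
      intro e he
      exact hFRfin.toFinset.min'_le e (hFRfin.mem_toFinset.2 he)
    · exact ⟨z, hz, rfl, le_refl z, hyz, fun e he => absurd ⟨e, he⟩ hne⟩
  have hyE : y ∉ E₀ := by
    intro hyE₀
    have hyF : y ∈ F := ⟨hyE₀, hxy.le, hyz.le⟩
    rcases hdi y hyF with h | h
    · exact absurd h.1 (lt_irrefl y)
    · exact absurd h.1 (lt_irrefl y)
  have hIooE : ∀ w ∈ Ioo u v, w ∉ E₀ := by
    intro w hw hwE
    have hwF : w ∈ F := ⟨hwE, hxu.trans hw.1.le, hw.2.le.trans hvz⟩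
    rcases hdi w hwF with h | h
    · exact absurd (huB w ⟨hwF, h.1⟩) (not_le.2 hw.1)
    · exact absurd (hvB w ⟨hwF, h.1⟩) (not_le.2 hw.2)
  have huv : u < v := huy.trans hyv
  rcases hmono2 u v huC hvC huv hIooE with hm | hm
  · have := hm (⟨le_refl u, huv.le⟩ : u ∈ Icc u v) (⟨huy.le, hyv.le⟩ : y ∈ Icc u v) huy.le
    -- g u ≤ g y; need the other side
    have h2 := hm (⟨huy.le, hyv.le⟩ : y ∈ Icc u v) (⟨huv.le, le_refl v⟩ : v ∈ Icc u v) hyv.le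
    rw [hgv] at h2
    linarith
  · have := hm (⟨le_refl u, huv.le⟩ : u ∈ Icc u v) (⟨huy.le, hyv.le⟩ : y ∈ Icc u v) huy.le
    rw [hgu] at this
    linarith

lemma samesign_of_no_zero {g : ℝ → ℝ} {T : Set ℝ} (hT : T.OrdConnected)
    (hg : ContinuousOn g T) (h : ∀ w ∈ T, g w ≠ 0) : SameSignOn g T := by
  intro s hsT t htT
  constructor
  · intro hneg
    rcases lt_trichotomy (g t) 0 with ht | ht | ht
    · exact ht
    · exact absurd ht (h t htT)
    · obtain ⟨w, hw, hw0⟩ := exists_zero_of_sign_change hT hg hsT htT hneg ht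
      exact absurd hw0 (h w hw)
  · intro hpos
    rcases lt_trichotomy (g t) 0 with ht | ht | ht
    · obtain ⟨w, hw, hw0⟩ := exists_zero_of_sign_change hT hg htT hsT ht hpos
      exact absurd hw0 (h w hw)
    · exact absurd ht (h t htT)
    · exact ht

/-- The central lemma: on any component of `I \ E` (`E` the pruned set), all of
`f`, `g₁`, `g₂` are monotone. -/
lemma pruned_main {I : Set ℝ} {f g₁ g₂ : ℝ → ℝ} (hs : Setting I f g₁ g₂)
    {E₀ : Set ℝ} (hE₀ : ClosedDiscreteIn E₀ I)
    (hcomp : ∀ x ∈ I \ E₀,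
      MonoOn g₂ (connectedComponentIn (I \ E₀) x) ∧
      (∀ s ∈ connectedComponentIn (I \ E₀) x,
        ∀ t ∈ connectedComponentIn (I \ E₀) x, ¬(g₂ s < 0 ∧ 0 < g₂ t)) ∧
      (∀ s ∈ connectedComponentIn (I \ E₀) x,
        ∀ t ∈ connectedComponentIn (I \ E₀) x, ¬(g₁ s < 0 ∧ 0 < g₁ t))) :
    ∀ x ∈ I \ prune g₁ g₂ I E₀,
      MonoOn f (connectedComponentIn (I \ prune g₁ g₂ I E₀) x) ∧
      MonoOn g₁ (connectedComponentIn (I \ prune g₁ g₂ I E₀) x) ∧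
      MonoOn g₂ (connectedComponentIn (I \ prune g₁ g₂ I E₀) x) := by
  intro x hx
  set E := prune g₁ g₂ I E₀ with hEdef
  set C := connectedComponentIn (I \ E) x with hCdef
  have hCord : C.OrdConnected := isPreconnected_connectedComponentIn.ordConnected
  have hCsub : C ⊆ I \ E := connectedComponentIn_subset _ _
  have hCI : C ⊆ I := hCsub.trans diff_subset
  have hCE : ∀ w ∈ C, w ∉ E := fun w hw => (hCsub hw).2
  have hfin : ∀ a b : ℝ, a ∈ C → b ∈ C → (E₀ ∩ Icc a b).Finite := by
    intro a b ha hb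
    rcases le_or_gt a b with h | h
    · exact finite_inter_Icc hE₀ (hs.ordConn.out (hCI ha) (hCI hb))
    · rw [Icc_eq_empty (not_le.2 h)]
      simp
  -- each old witness point in C has a platform covering one whole side of C
  have hsidePlat : ∀ e ∈ E₀ ∩ C,
      (C ∩ Iic e ⊆ Platform g₂ I e) ∨ (C ∩ Ici e ⊆ Platform g₂ I e) := by
    rintro e ⟨heE₀, heC⟩
    have hrP : rep g₁ E₀ (Platform g₂ I e) ∈ Platform g₂ I e :=
      prune_mem_platform hE₀.1 heE₀
    have hrE : rep g₁ E₀ (Platform g₂ I e) ∈ E := ⟨e, heE₀, rfl⟩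
    have hrC : rep g₁ E₀ (Platform g₂ I e) ∉ C := fun h => hCE _ h hrE
    have hre : e ≠ rep g₁ E₀ (Platform g₂ I e) := fun h => hCE e heC (h ▸ hrE)
    rcases lt_or_gt_of_ne hre with h | h
    · refine Or.inr fun b hb => ?_
      have hbr : b ≤ rep g₁ E₀ (Platform g₂ I e) := by
        by_contra hc
        exact hrC (hCord.out heC hb.1 ⟨h.le, (lt_of_not_ge hc).le⟩)
      exact (platform_ordConnected).out (platform_mem (hE₀.1 heE₀)) hrP ⟨hb.2, hbr⟩
    · refine Or.inl fun b hb => ?_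
      have hbr : rep g₁ E₀ (Platform g₂ I e) ≤ b := by
        by_contra hc
        exact hrC (hCord.out hb.1 heC ⟨(lt_of_not_ge hc).le, h.le⟩)
      exact (platform_ordConnected).out hrP (platform_mem (hE₀.1 heE₀)) ⟨hbr, hb.2⟩
  have hconst₂ : ∀ e ∈ E₀ ∩ C,
      (∀ t ∈ C ∩ Iic e, g₂ t = g₂ e) ∨ (∀ t ∈ C ∩ Ici e, g₂ t = g₂ e) := by
    intro e he
    rcases hsidePlat e he with h | h
    · exact Or.inl fun t ht => (platform_subset (h ht)).2
    · exact Or.inr fun t ht => (platform_subset (h ht)).2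
  have hside₂ : ∀ e ∈ E₀ ∩ C, SameSignOn g₂ (C ∩ Iic e) ∨ SameSignOn g₂ (C ∩ Ici e) := by
    intro e he
    rcases hconst₂ e he with h | h
    · refine Or.inl fun s hsT t htT => ?_
      rw [h s hsT, h t htT]
      exact ⟨id, id⟩
    · refine Or.inr fun s hsT t htT => ?_
      rw [h s hsT, h t htT]
      exact ⟨id, id⟩
  -- g₁ has constant sign on each side covered by a platform
  have hkey₁ : ∀ e ∈ E₀ ∩ C, ∀ T : Set ℝ, T.OrdConnected → T ⊆ C →
      T ⊆ Platform g₂ I e → SameSignOn g₁ T := by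
    rintro e ⟨heE₀, heC⟩ T hTord hTC hTP
    set P := Platform g₂ I e with hPdef
    have hPI : P ⊆ I := fun w hw => (platform_subset hw).1
    have hPfib : ∀ w ∈ P, g₂ w = g₂ e := fun w hw => (platform_subset hw).2
    have hPord : P.OrdConnected := platform_ordConnected
    have hnozero : (∀ w ∈ P, g₁ w ≠ 0) → SameSignOn g₁ T := by
      intro h
      exact samesign_of_no_zero hTord (hs.c1.mono (hTC.trans hCI)) fun w hw => h w (hTP hw)
    have hnozero' : InjOn g₁ P → SameSignOn g₁ T := by
      intro hinj
      refine samesign_of_no_zero hTord (hs.c1.mono (hTC.trans hCI)) fun w hw hw0 => ?_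
      have hne : (zset g₁ P).Nonempty := ⟨w, hTP hw, hw0⟩
      obtain ⟨hrP, hr0⟩ := rep_zero (E₀ := E₀) hne
      have : w = rep g₁ E₀ P := hinj (hTP hw) hrP (hw0.trans hr0.symm)
      have hrE : rep g₁ E₀ P ∈ prune g₁ g₂ I E₀ := ⟨e, heE₀, rfl⟩
      exact hCE w (hTC hw) (this ▸ hrE)
    rcases lt_trichotomy (g₂ e) 0 with hc | hc | hc
    · refine hnozero' (StrictAntiOn.injOn ?_)
      refine strictAntiOn_of_deriv_sign hs.d2 hPI hPord fun w hw => ?_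
      rw [hPfib w hw]; exact hc
    · have hconst := const_of_deriv_zero hs.d2 hPI hPord
        (fun w hw => by rw [hPfib w hw]; exact hc)
      intro s hsT t htT
      have := hconst s (hTP hsT) t (hTP htT)
      rw [this]
      exact ⟨id, id⟩
    · refine hnozero' (StrictMonoOn.injOn ?_)
      refine strictMonoOn_of_deriv_sign hs.d2 hPI hPord fun w hw => ?_
      rw [hPfib w hw]; exact hc
  have hside₁ : ∀ e ∈ E₀ ∩ C, SameSignOn g₁ (C ∩ Iic e) ∨ SameSignOn g₁ (C ∩ Ici e) := by
    intro e he
    rcases hsidePlat e he with h | h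
    · exact Or.inl (hkey₁ e he _ (hCord.inter Set.ordConnected_Iic) inter_subset_left h)
    · exact Or.inr (hkey₁ e he _ (hCord.inter Set.ordConnected_Ici) inter_subset_left h)
  have hcompE : ∀ m ∈ I \ E₀, m ∈ I \ E₀ := fun m hm => hm
  have hnoSign₂ : ∀ s ∈ C, ∀ t ∈ C, ¬(g₂ s < 0 ∧ 0 < g₂ t) :=
    no_sign_change hCord hCI hs.c2 hfin hside₂
      (fun m hm hm' => (hcomp m ⟨hm, hm'⟩).2.1)
  have hnoSign₁ : ∀ s ∈ C, ∀ t ∈ C, ¬(g₁ s < 0 ∧ 0 < g₁ t) :=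
    no_sign_change hCord hCI hs.c1 hfin hside₁
      (fun m hm hm' => (hcomp m ⟨hm, hm'⟩).2.2)
  -- monotonicity of g₂ on C via no peak / no valley
  have hmono2 : ∀ u v, u ∈ C → v ∈ C → u < v → (∀ w ∈ Ioo u v, w ∉ E₀) →
      MonoOn g₂ (Icc u v) := by
    intro u v hu hv huv hno
    have hIccC : Icc u v ⊆ C := hCord.out hu hv
    have hm : (u + v) / 2 ∈ Ioo u v := ⟨by linarith, by linarith⟩
    have hIooIE : Ioo u v ⊆ I \ E₀ :=
      fun w hw => ⟨hCI (hIccC (Ioo_subset_Icc_self hw)), hno w hw⟩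
    have hsub : Ioo u v ⊆ connectedComponentIn (I \ E₀) ((u + v) / 2) :=
      isPreconnected_Ioo.subset_connectedComponentIn hm hIooIE
    have hmono := (hcomp _ (hIooIE hm)).1
    have hmIoo : MonoOn g₂ (Ioo u v) := by
      rcases hmono with h | h
      · exact Or.inl (h.mono hsub)
      · exact Or.inr (h.mono hsub)
    exact monoOn_Icc_of_Ioo huv (hs.c2.mono ((hIccC.trans hCI))) hmIoo
  have hBetw : Betw g₂ C := by
    intro x' hx' y' hy' z' hz' h1 h2
    constructor
    · rintro ⟨ha, hb⟩
      exact no_peak_aux hCord hfin hconst₂ hmono2 hx' hy' hz' h1 h2 ha hb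
    · rintro ⟨ha, hb⟩
      refine no_peak_aux (g := fun w => -g₂ w) hCord hfin ?_ ?_ hx' hy' hz' h1 h2
        (by simpa using ha) (by simpa using hb)
      · intro e he
        rcases hconst₂ e he with h | h
        · exact Or.inl fun t ht => by simp [h t ht]
        · exact Or.inr fun t ht => by simp [h t ht]
      · intro u v hu hv huv hno
        exact MonoOn.neg' (hmono2 u v hu hv huv hno)
  have hMono₂ : MonoOn g₂ C := monoOn_of_betw hBetw
  -- monotonicity of g₁ via constant sign of g₂
  have hMono₁ : MonoOn g₁ C := by
    by_cases hpos : ∀ t ∈ C, 0 ≤ g₂ t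
    · exact Or.inl (monoOn_of_deriv_sign hs.d2 hCI hCord hpos)
    · push_neg at hpos
      obtain ⟨t₀, ht₀, ht₀'⟩ := hpos
      refine Or.inr (antiOn_of_deriv_sign hs.d2 hCI hCord fun t ht => ?_)
      by_contra hc
      exact hnoSign₂ t₀ ht₀ t ht ⟨ht₀', lt_of_not_ge hc⟩
  have hMono₀ : MonoOn f C := by
    by_cases hpos : ∀ t ∈ C, 0 ≤ g₁ t
    · exact Or.inl (monoOn_of_deriv_sign hs.d1 hCI hCord hpos)
    · push_neg at hpos
      obtain ⟨t₀, ht₀, ht₀'⟩ := hpos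
      refine Or.inr (antiOn_of_deriv_sign hs.d1 hCI hCord fun t ht => ?_)
      by_contra hc
      exact hnoSign₁ t₀ ht₀ t ht ⟨ht₀', lt_of_not_ge hc⟩
  exact ⟨hMono₀, hMono₁, hMono₂⟩

end CW2

/-- For a `C²` function `f` with `D²f` piecewise monotone, there is a closed
discrete set `E` witnessing the piecewise monotonicity of `f`, `Df` and `D²f`
simultaneously, with at most one point on each platform of `D²f`. -/
theorem common_witness_C2
    (I : Set ℝ) (hI : I.OrdConnected) (hnt : I.Nontrivial)
    (f : ℝ → ℝ) (hf : ContDiffOn ℝ 2 f I)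
    (h2 : PiecewiseMonotoneOn (iteratedDerivWithin 2 f I) I) :
    ∃ E, Witnesses f I E ∧
      Witnesses (iteratedDerivWithin 1 f I) I E ∧
      Witnesses (iteratedDerivWithin 2 f I) I E ∧
      ∀ p ∈ I, ∀ x ∈ E ∩ Platform (iteratedDerivWithin 2 f I) I p,
        ∀ y ∈ E ∩ Platform (iteratedDerivWithin 2 f I) I p, x = y := by
  classical
  obtain ⟨a, ha, b, hb, hab⟩ := hnt
  have hconv : Convex ℝ I := hI.convex
  have hint : (interior I).Nonempty := by
    rcases lt_or_gt_of_ne hab with h | h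
    · have hsub : Ioo a b ⊆ I := fun w hw => hI.out ha hb ⟨hw.1.le, hw.2.le⟩
      exact ⟨(a + b) / 2, interior_maximal hsub isOpen_Ioo ⟨by linarith, by linarith⟩⟩
    · have hsub : Ioo b a ⊆ I := fun w hw => hI.out hb ha ⟨hw.1.le, hw.2.le⟩
      exact ⟨(a + b) / 2, interior_maximal hsub isOpen_Ioo ⟨by linarith, by linarith⟩⟩
  have hu : UniqueDiffOn ℝ I := uniqueDiffOn_convex hconv hint
  set g₁ := iteratedDerivWithin 1 f I with hg₁
  set g₂ := iteratedDerivWithin 2 f I with hg₂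
  have hd1 : ∀ t ∈ I, HasDerivWithinAt f (g₁ t) I t := by
    intro t ht
    have hdf : DifferentiableOn ℝ f I := hf.differentiableOn (by norm_num)
    have hgoal := (hdf t ht).hasDerivWithinAt
    rw [hg₁, iteratedDerivWithin_one]
    exact hgoal
  have hd2 : ∀ t ∈ I, HasDerivWithinAt g₁ (g₂ t) I t := by
    intro t ht
    have hdg : DifferentiableOn ℝ g₁ I := by
      rw [hg₁]
      exact hf.differentiableOn_iteratedDerivWithin (by norm_num) hu
    have hgoal := (hdg t ht).hasDerivWithinAt
    have h2' : g₂ t = derivWithin g₁ I t := by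
      rw [hg₂, hg₁, show (2 : ℕ) = 1 + 1 from rfl]
      exact congrFun iteratedDerivWithin_succ t
    rw [h2']
    exact hgoal
  have hc2 : ContinuousOn g₂ I := by
    rw [hg₂]
    exact hf.continuousOn_iteratedDerivWithin (by norm_num) hu
  have hs : CW2.Setting I f g₁ g₂ := ⟨hI, hd1, hd2, hc2⟩
  obtain ⟨K, hWK⟩ := h2
  set E₀ := CW2.E0 g₁ g₂ I K with hE₀def
  have hE₀disc : ClosedDiscreteIn E₀ I := CW2.E0_discrete hI hWK.1
  have hcomp := CW2.compProps hs hWK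
  set E := CW2.prune g₁ g₂ I E₀ with hEdef
  have hEdisc : ClosedDiscreteIn E I := CW2.prune_discrete hE₀disc
  have hmain := CW2.pruned_main hs hE₀disc hcomp
  refine ⟨E, ⟨hEdisc, fun x hx => (hmain x hx).1⟩, ⟨hEdisc, fun x hx => (hmain x hx).2.1⟩,
    ⟨hEdisc, fun x hx => (hmain x hx).2.2⟩, ?_⟩
  intro p hp x hxmem y hymem
  exact CW2.prune_unique hE₀disc.1 hxmem hymem
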